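/- Let G=(V,E) be a DAG and let u,v be distinct vertices and S ⊆ V∖{u,v}. If u and v are d-separated given S in G, then u and v are d-separated given S ∩ (an(G,u) ∪ an(G,v)) in G. -/

import Mathlib

/-! Basic graphical-model definitions: DAGs as binary relations on a finite
vertex type, d-separation via paths (lists of vertices), Markov equivalence,
and definite (non-)ancestral relations. -/

variable {V : Type*}

/-- Two nodes are adjacent in the digraph `E` if there is an edge between them
in either direction. -/
def Adjacent (E : V → V → Prop) (a b : V) : Prop := E a b ∨ E b a

/-- A digraph is acyclic if it has no directed cycles. -/
def Acyclic (E : V → V → Prop) : Prop := ∀ v : V, ¬ Relation.TransGen E v v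

/-- `u` is an ancestor of `v`: there is a directed path from `u` to `v`
(by convention, `v` is an ancestor of itself). -/
def Anc (E : V → V → Prop) (u v : V) : Prop := Relation.ReflTransGen E u v

/-- A list of vertices is a path in the skeleton of `E`: consecutive vertices
are adjacent and no vertex repeats. -/
def IsPath (E : V → V → Prop) (p : List V) : Prop :=
  p.Nodup ∧ List.Chain' (Adjacent E) p

/-- A path `p` is d-connecting given the conditioning set `C` if every collider
on it is an ancestor of an element of `C` and every non-collider on it is
outside `C`.  Interior vertices of `p` are exactly the middle elements `x` of
consecutive triples `[a, x, b]` of `p`; such an `x` is a collider when both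
incident edges point into it. -/
def IsDConnectingPath (E : V → V → Prop) (C : Set V) (p : List V) : Prop :=
  ∀ a x b : V, [a, x, b] <:+: p →
    ((E a x ∧ E b x) → ∃ c ∈ C, Anc E x c) ∧ (¬ (E a x ∧ E b x) → x ∉ C)

/-- `u` and `v` are d-connected given `C` in `E`. -/
def DConn (E : V → V → Prop) (C : Set V) (u v : V) : Prop :=
  ∃ p : List V, IsPath E p ∧ p.head? = some u ∧ p.getLast? = some v ∧
    IsDConnectingPath E C p

/-- `u` and `v` are d-separated given `C` in `E`. -/
def DSep (E : V → V → Prop) (C : Set V) (u v : V) : Prop := ¬ DConn E C u v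

/-- Two DAGs on the same vertex set are Markov equivalent if they have exactly
the same d-separation relations. -/
def MarkovEquiv (E E' : V → V → Prop) : Prop :=
  ∀ (u v : V) (C : Set V), u ≠ v → u ∉ C → v ∉ C → (DSep E C u v ↔ DSep E' C u v)

/-- `u` is definite ancestral to `v` (`u ⇝ v`): `u` is an ancestor of `v` in
every DAG Markov equivalent to `E`. -/
def DefAnc (E : V → V → Prop) (u v : V) : Prop :=
  ∀ E' : V → V → Prop, Acyclic E' → MarkovEquiv E E' → Anc E' u v

/-- `u` is definite non-ancestral to `v` (`u ̸⇝ v`): `u` is not an ancestor of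
`v` in any DAG Markov equivalent to `E`. -/
def DefNonAnc (E : V → V → Prop) (u v : V) : Prop :=
  ∀ E' : V → V → Prop, Acyclic E' → MarkovEquiv E E' → ¬ Anc E' u v

/-- The CPDAG of `E` has a directed edge `a → b` iff `a` and `b` are adjacent
and the edge is oriented `a → b` in every member of the Markov equivalence
class of `E`. -/
def CPDAGDir (E : V → V → Prop) (a b : V) : Prop :=
  Adjacent E a b ∧ ∀ E' : V → V → Prop, Acyclic E' → MarkovEquiv E E' → E' a b

/-- A possibly directed path in the CPDAG of `E`: a path in the skeleton such
that no edge on it is directed backwards (as `x_{i+1} → x_i`) in the CPDAG. -/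
def IsPossiblyDirectedPath (E : V → V → Prop) (p : List V) : Prop :=
  p.Nodup ∧ List.Chain' (fun a b => Adjacent E a b ∧ ¬ CPDAGDir E b a) p

/-- A path is unshielded if no three consecutive vertices on it are pairwise
adjacent. -/
def UnshieldedPath (E : V → V → Prop) (p : List V) : Prop :=
  ∀ a x b : V, [a, x, b] <:+: p → ¬ Adjacent E a b


/-- Auxiliary walk lemma: if `W` is an ancestrally closed set, the path
`x :: b :: t` starts with a directed edge `x → b`, every collider on it lies
in `W`, and its last element lies in `W`, then `x ∈ W`. -/
lemma walkLemma (E : V → V → Prop) (W : Set V)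
    (hW : ∀ x y, Anc E x y → y ∈ W → x ∈ W) :
    ∀ t : List V, ∀ x b : V, E x b →
    List.Chain' (Adjacent E) (x :: b :: t) →
    (∀ a y c : V, [a, y, c] <:+: (x :: b :: t) → E a y → E c y → y ∈ W) →
    ∀ z ∈ W, (x :: b :: t).getLast? = some z → x ∈ W := by
  intro t
  induction t with
  | nil =>
    intro x b hxb _ _ z hz hlast
    have : b = z := by simpa using hlast
    exact hW x b (Relation.ReflTransGen.single hxb) (this ▸ hz)
  | cons w t' ih =>
    intro x b hxb hchain hcoll z hz hlast
    by_cases hwb : E w b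
    · have hbW : b ∈ W := hcoll x b w ⟨[], t', rfl⟩ hxb hwb
      exact hW x b (Relation.ReflTransGen.single hxb) hbW
    · have hadj : Adjacent E b w := (List.isChain_cons_cons.mp hchain).2.rel_head
      have hbw : E b w := hadj.resolve_right hwb
      have hbW : b ∈ W := by
        refine ih b w hbw (List.isChain_cons_cons.mp hchain).2 ?_ z hz ?_
        · intro a y c hinf hay hcy
          exact hcoll a y c (hinf.trans (List.suffix_cons x _).isInfix) hay hcy
        · simpa [List.getLast?_cons_cons] using hlast
      exact hW x b (Relation.ReflTransGen.single hxb) hbW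

/-- key step of Lemma 5: if `u` and `v` are d-separated
given `S`, then they are d-separated given `S ∩ (an(u) ∪ an(v))`. -/
theorem stmt11 [Fintype V] (E : V → V → Prop) (hE : Acyclic E) (u v : V) (huv : u ≠ v)
    (S : Set V) (hSu : u ∉ S) (hSv : v ∉ S)
    (hsep : DSep E S u v) :
    DSep E (S ∩ {w : V | Anc E w u ∨ Anc E w v}) u v := by
  set W : Set V := {w : V | Anc E w u ∨ Anc E w v} with hWdef
  have hW : ∀ x y, Anc E x y → y ∈ W → x ∈ W := by
    intro x y hxy hy
    rcases hy with h | h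
    · exact Or.inl (hxy.trans h)
    · exact Or.inr (hxy.trans h)
  intro hconn
  apply hsep
  obtain ⟨p, hpath, hhead, hlast, hdc⟩ := hconn
  refine ⟨p, hpath, hhead, hlast, ?_⟩
  intro a x b hinf
  -- collider condition for every infix triple on `p`, giving membership in `W`
  have hcoll : ∀ a y c : V, [a, y, c] <:+: p → E a y → E c y → y ∈ W := by
    intro a y c hinf hay hcy
    obtain ⟨d, hd, hyd⟩ := (hdc a y c hinf).1 ⟨hay, hcy⟩
    exact hW y d hyd hd.2
  refine ⟨?_, ?_⟩
  · intro hc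
    obtain ⟨d, hd, hyd⟩ := (hdc a x b hinf).1 hc
    exact ⟨d, hd.1, hyd⟩
  · intro hnc hxS
    -- show x ∈ W; then x ∈ S ∩ W contradicts the d-connecting property
    have hxW : x ∈ W := by
      obtain ⟨s, t, hst⟩ := hinf
      have hadjax : Adjacent E a x := by
        have := (hpath.2).infix ⟨s, t, hst⟩
        exact (List.isChain_cons_cons.mp this).1
      have hadjxb : Adjacent E x b := by
        have := (hpath.2).infix ⟨s, t, hst⟩
        exact ((List.isChain_cons_cons.mp this).2).rel_head
      by_cases hbx : E b x
      · -- then ¬ E a x, so E x a; walk backwards along the reversed path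
        have hax : ¬ E a x := fun h => hnc ⟨h, hbx⟩
        have hxa : E x a := hadjax.resolve_left hax
        have hrev : p.reverse = t.reverse ++ [b, x, a] ++ s.reverse := by
          rw [← hst]; simp
        have hchain : List.Chain' (Adjacent E) (x :: a :: s.reverse) := by
          have h1 : List.Chain' (Adjacent E) p.reverse := by
            show List.IsChain (Adjacent E) p.reverse; rw [List.isChain_reverse]
            exact hpath.2.imp (fun _ _ h => h.symm)
          have h2 : (x :: a :: s.reverse) <:+: p.reverse :=
            ⟨t.reverse ++ [b], [], by rw [hrev]; simp⟩
          exact h1.infix h2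
        have hcoll' : ∀ a' y c' : V, [a', y, c'] <:+: (x :: a :: s.reverse) →
            E a' y → E c' y → y ∈ W := by
          intro a' y c' hinf' ha' hc'
          have hinf2 : [a', y, c'] <:+: p.reverse :=
            hinf'.trans ⟨t.reverse ++ [b], [], by rw [hrev]; simp⟩
          have : [c', y, a'] <:+: p := by
            have := hinf2.reverse
            simpa using this
          exact hcoll c' y a' this hc' ha'
        have huW : u ∈ W := Or.inl Relation.ReflTransGen.refl
        refine walkLemma E W hW s.reverse x a hxa hchain hcoll' u huW ?_
        have : p.reverse.getLast? = some u := by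
          rw [List.getLast?_reverse]; exact hhead
        have hne : (x :: a :: s.reverse) ≠ [] := by simp
        have hsuf : (x :: a :: s.reverse) <:+ p.reverse :=
          ⟨t.reverse ++ [b], by rw [hrev]; simp⟩
        obtain ⟨r, hr⟩ := hsuf
        rw [← this, ← hr, List.getLast?_append_of_ne_nil r hne]
      · have hxb : E x b := hadjxb.resolve_right hbx
        have hchain : List.Chain' (Adjacent E) (x :: b :: t) := by
          refine hpath.2.infix ⟨s ++ [a], [], ?_⟩
          rw [← hst]; simp
        have hcoll' : ∀ a' y c' : V, [a', y, c'] <:+: (x :: b :: t) →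
            E a' y → E c' y → y ∈ W := by
          intro a' y c' hinf' ha' hc'
          exact hcoll a' y c' (hinf'.trans ⟨s ++ [a], [], by rw [← hst]; simp⟩) ha' hc'
        have hvW : v ∈ W := Or.inr Relation.ReflTransGen.refl
        refine walkLemma E W hW t x b hxb hchain hcoll' v hvW ?_
        have hne : (x :: b :: t) ≠ [] := by simp
        have hsuf : (x :: b :: t) <:+ p := ⟨s ++ [a], by rw [← hst]; simp⟩
        obtain ⟨r, hr⟩ := hsuf
        rw [← hlast, ← hr, List.getLast?_append_of_ne_nil r hne]
    exact (hdc a x b hinf).2 hnc ⟨hxS, hxW⟩
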